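/- Let T be an infinite rooted tree, ψ : T → ℂ, m ≠ n natural numbers, and suppose M_ψ : L^(m) → L^(n) is bounded. If lim_{|v|→∞} |ψ'(v)|ℓ_m(|v|)Λ_n(|v|) = 0 and lim_{|v|→∞} |ψ(v⁻)|Λ_n(|v|)/Λ_m(|v|) = 0, then for every sequence (f_k) bounded in L^(m)-norm converging to 0 pointwise on T, ‖ψ f_k‖_n → 0. -/

import Mathlib

open Real Filter

/-- Iterated logarithm: ℓ₀(x) = x, ℓ_{j+1}(x) = 1 + log ℓ_j(x). -/
noncomputable def ell : ℕ → ℝ → ℝ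
  | 0, x => x
  | j + 1, x => 1 + Real.log (ell j x)

/-- Λ_k(x) = ∏_{j=0}^{k-1} ℓ_j(x). -/
noncomputable def Lam (k : ℕ) (x : ℝ) : ℝ := ∏ j ∈ Finset.range k, ell j x

/-- Discrete derivative of f on a rooted tree given by a parent map:
`f v - f (parent v)` (automatically 0 at the root since `parent o = o`). -/
def Der {V : Type*} (parent : V → V) (f : V → ℂ) (v : V) : ℂ := f v - f (parent v)

/-- The set of values |f'(v)|·Λ_k(|v|) over v ≠ o; f ∈ L^(k) iff this set is bounded above. -/
def lipSet {V : Type*} (o : V) (parent : V → V) (depth : V → ℕ) (k : ℕ) (f : V → ℂ) : Set ℝ :=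
  {r | ∃ v, v ≠ o ∧ r = ‖Der parent f v‖ * Lam k (depth v)}

/-- ‖f‖_k = |f(o)| + sup_{v ≠ o} |f'(v)|·Λ_k(|v|). -/
noncomputable def lipNorm {V : Type*} (o : V) (parent : V → V) (depth : V → ℕ) (k : ℕ)
    (f : V → ℂ) : ℝ :=
  ‖f o‖ + sSup (lipSet o parent depth k f)

lemma ell_ge_one (j : ℕ) : ∀ x : ℝ, 1 ≤ x → 1 ≤ ell j x := by
  induction j with
  | zero => intro x hx; simpa [ell] using hx
  | succ j ih =>
    intro x hx
    have h1 : 1 ≤ ell j x := ih x hx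
    have h2 : 0 ≤ Real.log (ell j x) := Real.log_nonneg h1
    show (1 : ℝ) ≤ 1 + Real.log (ell j x)
    linarith

lemma ell_one (j : ℕ) : ell j 1 = 1 := by
  induction j with
  | zero => rfl
  | succ j ih => show 1 + Real.log (ell j 1) = 1; rw [ih, Real.log_one]; ring

lemma ell_monotoneOn (j : ℕ) : MonotoneOn (ell j) (Set.Ici 1) := by
  induction j with
  | zero => exact fun x _ y _ h => by simpa [ell] using h
  | succ j ih =>
    intro x hx y hy hxy
    have h1 : (0:ℝ) < ell j x := lt_of_lt_of_le one_pos (ell_ge_one j x hx)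
    have := Real.log_le_log h1 (ih hx hy hxy)
    show 1 + Real.log (ell j x) ≤ 1 + Real.log (ell j y)
    linarith

lemma Lam_ge_one (k : ℕ) {x : ℝ} (hx : 1 ≤ x) : 1 ≤ Lam k x := by
  unfold Lam
  calc (1:ℝ) = ∏ _j ∈ Finset.range k, 1 := by simp
    _ ≤ ∏ j ∈ Finset.range k, ell j x :=
      Finset.prod_le_prod (by simp) (fun j _ => ell_ge_one j x hx)

lemma Lam_pos (k : ℕ) {x : ℝ} (hx : 1 ≤ x) : 0 < Lam k x :=
  lt_of_lt_of_le one_pos (Lam_ge_one k hx)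

lemma Lam_one (k : ℕ) : Lam k 1 = 1 := by
  simp [Lam, ell_one]

lemma Lam_monotoneOn (k : ℕ) : MonotoneOn (Lam k) (Set.Ici 1) := by
  intro x hx y hy hxy
  exact Finset.prod_le_prod (fun j _ => le_trans zero_le_one (ell_ge_one j x hx))
    (fun j _ => ell_monotoneOn j hx hy hxy)

lemma hasDerivAt_ell (j : ℕ) {x : ℝ} (hx : 1 ≤ x) :
    HasDerivAt (ell j) (1 / Lam j x) x := by
  induction j with
  | zero =>
    have h : (1:ℝ) / Lam 0 x = 1 := by simp [Lam]
    rw [h]; exact hasDerivAt_id' x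
  | succ j ih =>
    have h1 : (0:ℝ) < ell j x := lt_of_lt_of_le one_pos (ell_ge_one j x hx)
    have hlog : HasDerivAt Real.log (1 / ell j x) (ell j x) := by
      simpa [one_div] using Real.hasDerivAt_log (ne_of_gt h1)
    have := (hlog.comp x ih).const_add 1
    have heq : 1 / ell j x * (1 / Lam j x) = 1 / Lam (j+1) x := by
      have hL : Lam (j+1) x = Lam j x * ell j x := Finset.prod_range_succ _ _
      have h2 : (0:ℝ) < Lam j x := Lam_pos j hx
      rw [hL]
      field_simp
    rw [heq] at this
    exact this

lemma ell_step (m : ℕ) {x : ℝ} (hx : 1 ≤ x) :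
    1 / Lam m (x + 1) ≤ ell m (x + 1) - ell m x := by
  have hab : x < x + 1 := by linarith
  obtain ⟨c, hc, hceq⟩ := exists_hasDerivAt_eq_slope (ell m) (fun y => 1 / Lam m y) hab
    (fun y hy => (hasDerivAt_ell m (le_trans hx hy.1)).continuousAt.continuousWithinAt)
    (fun y hy => hasDerivAt_ell m (le_trans hx (le_of_lt hy.1)))
  have hc1 : 1 ≤ c := le_trans hx (le_of_lt hc.1)
  have h1 : Lam m c ≤ Lam m (x + 1) := Lam_monotoneOn m hc1 (by linarith : (1:ℝ) ≤ x + 1)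
    (le_of_lt hc.2)
  have h2 : 0 < Lam m c := Lam_pos m hc1
  calc 1 / Lam m (x+1) ≤ 1 / Lam m c := by
        apply one_div_le_one_div_of_le h2 h1
    _ = ell m (x+1) - ell m x := by rw [hceq]; field_simp; ring

lemma sum_inv_Lam_le (m : ℕ) : ∀ N : ℕ, 1 ≤ N →
    ∑ j ∈ Finset.Icc 1 N, 1 / Lam m (j : ℝ) ≤ ell m (N : ℝ) := by
  intro N hN
  induction N, hN using Nat.le_induction with
  | base => simp [Lam_one, ell_one]
  | succ N hN ih =>
    rw [Finset.sum_Icc_succ_top (by omega : 1 ≤ N + 1)]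
    have hstep := ell_step m (by exact_mod_cast hN : (1:ℝ) ≤ (N:ℝ))
    push_cast
    push_cast at ih
    linarith

lemma sum_inv_Lam_nonneg (m N : ℕ) : 0 ≤ ∑ j ∈ Finset.Icc 1 N, 1 / Lam m (j : ℝ) := by
  apply Finset.sum_nonneg
  intro j hj
  have h1 : (1:ℝ) ≤ (j:ℝ) := by exact_mod_cast (Finset.mem_Icc.mp hj).1
  exact le_of_lt (div_pos one_pos (Lam_pos m h1))

lemma eval_bound {V : Type*} (o : V) (parent : V → V) (depth : V → ℕ)
    (hdepth : ∀ v, v ≠ o → depth v = depth (parent v) + 1)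
    (m : ℕ) (f : V → ℂ) (hb : BddAbove (lipSet o parent depth m f))
    (hS : 0 ≤ sSup (lipSet o parent depth m f)) :
    ∀ v, ‖f v‖ ≤ ‖f o‖
      + sSup (lipSet o parent depth m f) * ∑ j ∈ Finset.Icc 1 (depth v), 1 / Lam m (j : ℝ) := by
  set S := sSup (lipSet o parent depth m f) with hSdef
  have main : ∀ N : ℕ, ∀ v, depth v ≤ N → ‖f v‖ ≤ ‖f o‖
      + S * ∑ j ∈ Finset.Icc 1 (depth v), 1 / Lam m (j : ℝ) := by
    intro N
    induction N with
    | zero =>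
      intro v hv
      by_cases h : v = o
      · subst h
        have := mul_nonneg hS (sum_inv_Lam_nonneg m (depth v))
        linarith
      · have := hdepth v h; omega
    | succ N ih =>
      intro v hv
      by_cases h : v = o
      · subst h
        have := mul_nonneg hS (sum_inv_Lam_nonneg m (depth v))
        linarith
      · have hd := hdepth v h
        have hp : depth (parent v) ≤ N := by omega
        have ihp := ih (parent v) hp
        have hel : ‖Der parent f v‖ * Lam m (depth v) ∈ lipSet o parent depth m f :=
          ⟨v, h, rfl⟩
        have hle : ‖Der parent f v‖ * Lam m (depth v) ≤ S := le_csSup hb hel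
        have hd1 : (1:ℝ) ≤ ((depth v : ℕ) : ℝ) := by
          have : 1 ≤ depth v := by omega
          exact_mod_cast this
        have hLpos : 0 < Lam m (depth v : ℝ) := Lam_pos m hd1
        have h2 : ‖f v‖ ≤ ‖f (parent v)‖ + ‖Der parent f v‖ := by
          have hfe : f v = f (parent v) + Der parent f v := by simp [Der]
          calc ‖f v‖ = ‖f (parent v) + Der parent f v‖ := by rw [← hfe]
            _ ≤ _ := norm_add_le _ _
        have h3 : ‖Der parent f v‖ ≤ S * (1 / Lam m (depth v : ℝ)) := by
          rw [mul_one_div, le_div_iff₀ hLpos]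
          exact hle
        have hsum : ∑ j ∈ Finset.Icc 1 (depth v), 1 / Lam m (j : ℝ)
            = (∑ j ∈ Finset.Icc 1 (depth (parent v)), 1 / Lam m (j : ℝ))
              + 1 / Lam m (depth v : ℝ) := by
          rw [hd, Finset.sum_Icc_succ_top (by omega : 1 ≤ depth (parent v) + 1)]
        rw [hsum, mul_add]
        linarith
  intro v; exact main (depth v) v le_rfl

lemma eval_bound' {V : Type*} (o : V) (parent : V → V) (depth : V → ℕ)
    (hdepth : ∀ v, v ≠ o → depth v = depth (parent v) + 1)
    (m : ℕ) (f : V → ℂ) (hb : BddAbove (lipSet o parent depth m f))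
    (hS : 0 ≤ sSup (lipSet o parent depth m f)) :
    ∀ v, v ≠ o → ‖f v‖ ≤ ell m (depth v : ℝ) * lipNorm o parent depth m f := by
  intro v hv
  have h1 := eval_bound o parent depth hdepth m f hb hS v
  have hd1 : 1 ≤ depth v := by have := hdepth v hv; omega
  have hsum := sum_inv_Lam_le m (depth v) hd1
  have hd1' : (1:ℝ) ≤ ((depth v : ℕ) : ℝ) := by exact_mod_cast hd1
  have hell : 1 ≤ ell m (depth v : ℝ) := ell_ge_one m _ hd1'
  have habs : 0 ≤ ‖f o‖ := norm_nonneg _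
  have h2 : sSup (lipSet o parent depth m f) * (∑ j ∈ Finset.Icc 1 (depth v), 1 / Lam m (j : ℝ))
      ≤ sSup (lipSet o parent depth m f) * ell m (depth v : ℝ) :=
    mul_le_mul_of_nonneg_left hsum hS
  unfold lipNorm
  nlinarith [sum_inv_Lam_nonneg m (depth v)]

/-- If M_ψ : L^(m) → L^(n) is bounded and both characterizing quantities vanish as
|v| → ∞, then M_ψ maps bounded pointwise-null sequences to norm-null sequences. -/
theorem compact_sufficient {V : Type*} (o : V) (parent : V → V) (depth : V → ℕ)
    (hpar : parent o = o) (hdepth0 : depth o = 0)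
    (hdepth : ∀ v, v ≠ o → depth v = depth (parent v) + 1)
    (hchild : ∀ v, ∃ w, w ≠ o ∧ parent w = v)
    (hlocfin : ∀ M : ℕ, {v : V | depth v ≤ M}.Finite)
    (ψ : V → ℂ) (m n : ℕ) (hmn : m ≠ n)
    (hbdd : ∃ C : ℝ, ∀ f : V → ℂ, BddAbove (lipSet o parent depth m f) →
      BddAbove (lipSet o parent depth n (fun v => ψ v * f v)) ∧
      lipNorm o parent depth n (fun v => ψ v * f v) ≤ C * lipNorm o parent depth m f)
    (hμ : ∀ ε > (0 : ℝ), ∃ M : ℕ, ∀ v, v ≠ o → M ≤ depth v →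
      ‖Der parent ψ v‖ * ell m (depth v) * Lam n (depth v) < ε)
    (hν : ∀ ε > (0 : ℝ), ∃ M : ℕ, ∀ v, v ≠ o → M ≤ depth v →
      ‖ψ (parent v)‖ * Lam n (depth v) / Lam m (depth v) < ε) :
    ∀ f : ℕ → V → ℂ,
      (∀ k, BddAbove (lipSet o parent depth m (f k))) →
      (∃ B : ℝ, ∀ k, lipNorm o parent depth m (f k) ≤ B) →
      (∀ v, Tendsto (fun k => f k v) atTop (nhds (0 : ℂ))) →
      Tendsto (fun k => lipNorm o parent depth n (fun v => ψ v * f k v)) atTop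
        (nhds (0 : ℝ)) := by
  intro f hbf hBex hptw
  obtain ⟨B, hB⟩ := hBex
  obtain ⟨C0, hC0⟩ := hbdd
  have hdepth1 : ∀ v, v ≠ o → 1 ≤ depth v := fun v hv => by rw [hdepth v hv]; omega
  have hLam1 : ∀ (k' : ℕ) (v : V), v ≠ o → (1:ℝ) ≤ Lam k' (depth v) := by
    intro k' v hv
    exact Lam_ge_one k' (by exact_mod_cast hdepth1 v hv)
  have hmem_nonneg : ∀ (k' : ℕ) (g : V → ℂ) (r : ℝ),
      r ∈ lipSet o parent depth k' g → 0 ≤ r := by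
    rintro k' g r ⟨v, hv, rfl⟩
    exact mul_nonneg (norm_nonneg _) (le_trans zero_le_one (hLam1 k' v hv))
  have hne : ∀ (k' : ℕ) (g : V → ℂ), (lipSet o parent depth k' g).Nonempty := by
    intro k' g
    obtain ⟨w, hw, -⟩ := hchild o
    exact ⟨_, w, hw, rfl⟩
  have hSnonneg : ∀ (k' : ℕ) (g : V → ℂ), BddAbove (lipSet o parent depth k' g) →
      0 ≤ sSup (lipSet o parent depth k' g) := by
    intro k' g hb
    obtain ⟨r, hr⟩ := hne k' g
    exact le_trans (hmem_nonneg k' g r hr) (le_csSup hb hr)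
  have hbψ : ∀ k, BddAbove (lipSet o parent depth n (fun v => ψ v * f k v)) :=
    fun k => (hC0 (f k) (hbf k)).1
  have hnormm_nonneg : ∀ k, 0 ≤ lipNorm o parent depth m (f k) := fun k =>
    add_nonneg (norm_nonneg _) (hSnonneg m (f k) (hbf k))
  have hBnonneg : 0 ≤ B := le_trans (hnormm_nonneg 0) (hB 0)
  have hSm_le : ∀ k, sSup (lipSet o parent depth m (f k)) ≤ B := by
    intro k
    have : sSup (lipSet o parent depth m (f k)) ≤ lipNorm o parent depth m (f k) := by
      unfold lipNorm
      have := norm_nonneg (f k o)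
      linarith
    exact le_trans this (hB k)
  rw [Metric.tendsto_atTop]
  intro ε hε
  have hB1 : (0:ℝ) < B + 1 := by linarith
  set ε' : ℝ := ε / (8 * (B + 1)) with hε'def
  have hε'pos : 0 < ε' := by positivity
  have hεeq : ε' * (8 * (B + 1)) = ε := div_mul_cancel₀ _ (by positivity)
  obtain ⟨M₁, hM₁⟩ := hμ ε' hε'pos
  obtain ⟨M₂, hM₂⟩ := hν ε' hε'pos
  set M := max M₁ M₂ with hMdef
  -- tendsto of each small-depth term
  have hterm : ∀ v : V, Tendsto
      (fun k => ‖Der parent (fun w => ψ w * f k w) v‖ * Lam n (depth v))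
      atTop (nhds 0) := by
    intro v
    have h1 : Tendsto (fun k => ψ v * f k v - ψ (parent v) * f k (parent v)) atTop
        (nhds 0) := by
      have := (Filter.Tendsto.const_mul (ψ v) (hptw v)).sub
        (Filter.Tendsto.const_mul (ψ (parent v)) (hptw (parent v)))
      simpa using this
    have h2 : Tendsto (fun k => ‖ψ v * f k v - ψ (parent v) * f k (parent v)‖) atTop (nhds 0) := by
      have := (continuous_norm.tendsto 0).comp h1
      simpa [Function.comp_def] using this
    have h3 := h2.mul_const (Lam n (depth v))
    rw [zero_mul] at h3
    simpa [Der] using h3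
  have hroot : Tendsto (fun k => ‖ψ o * f k o‖) atTop (nhds 0) := by
    have h1 : Tendsto (fun k => ψ o * f k o) atTop (nhds 0) := by
      simpa using Filter.Tendsto.const_mul (ψ o) (hptw o)
    have := (continuous_norm.tendsto 0).comp h1
    simpa [Function.comp_def] using this
  have hev1 : ∀ᶠ k in atTop, ∀ v ∈ {v : V | depth v ≤ M},
      ‖Der parent (fun w => ψ w * f k w) v‖ * Lam n (depth v) < ε / 4 :=
    (eventually_all_finite (hlocfin M)).mpr
      (fun v _ => (hterm v).eventually_lt_const (by linarith))
  have hev2 : ∀ᶠ k in atTop, ‖ψ o * f k o‖ < ε / 2 :=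
    hroot.eventually_lt_const (by linarith)
  obtain ⟨K, hK⟩ := (hev1.and hev2).exists_forall_of_atTop
  refine ⟨K, fun k hk => ?_⟩
  obtain ⟨h1, h2⟩ := hK k hk
  have hsup : sSup (lipSet o parent depth n (fun v => ψ v * f k v)) ≤ ε / 4 := by
    apply csSup_le (hne n _)
    rintro r ⟨v, hv, rfl⟩
    by_cases hcase : depth v ≤ M
    · exact le_of_lt (h1 v hcase)
    · push_neg at hcase
      have hM1 : M₁ ≤ depth v := le_trans (le_max_left M₁ M₂) hcase.le
      have hM2 : M₂ ≤ depth v := le_trans (le_max_right M₁ M₂) hcase.le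
      have hμv := hM₁ v hv hM1
      have hνv := hM₂ v hv hM2
      have hd1 : (1:ℝ) ≤ ((depth v : ℕ) : ℝ) := by exact_mod_cast hdepth1 v hv
      have hLm : 0 < Lam m (depth v : ℝ) := Lam_pos m hd1
      have hLn : 0 ≤ Lam n (depth v : ℝ) := le_of_lt (Lam_pos n hd1)
      have hfv := eval_bound' o parent depth hdepth m (f k) (hbf k)
        (hSnonneg m (f k) (hbf k)) v hv
      have hDf : ‖Der parent (f k) v‖ * Lam m (depth v) ≤ B :=
        le_trans (le_csSup (hbf k) ⟨v, hv, rfl⟩) (hSm_le k)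
      have hDer : Der parent (fun w => ψ w * f k w) v
          = Der parent ψ v * f k v + ψ (parent v) * Der parent (f k) v := by
        simp only [Der]
        ring
      have habs : ‖Der parent (fun w => ψ w * f k w) v‖
          ≤ ‖Der parent ψ v‖ * ‖f k v‖
            + ‖ψ (parent v)‖ * ‖Der parent (f k) v‖ := by
        rw [hDer]
        calc ‖Der parent ψ v * f k v + ψ (parent v) * Der parent (f k) v‖
            ≤ ‖Der parent ψ v * f k v‖
              + ‖ψ (parent v) * Der parent (f k) v‖ := norm_add_le _ _
          _ = _ := by rw [norm_mul, norm_mul]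
      have hterm1 : ‖Der parent ψ v‖ * ‖f k v‖ * Lam n (depth v)
          ≤ ε' * B := by
        calc ‖Der parent ψ v‖ * ‖f k v‖ * Lam n (depth v)
            = (‖Der parent ψ v‖ * Lam n (depth v)) * ‖f k v‖ := by
              ring
          _ ≤ (‖Der parent ψ v‖ * Lam n (depth v))
              * (ell m (depth v) * lipNorm o parent depth m (f k)) := by
              apply mul_le_mul_of_nonneg_left hfv
              exact mul_nonneg (norm_nonneg _) hLn
          _ = (‖Der parent ψ v‖ * ell m (depth v) * Lam n (depth v))
              * lipNorm o parent depth m (f k) := by ring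
          _ ≤ ε' * B :=
              mul_le_mul (le_of_lt hμv) (hB k) (hnormm_nonneg k) (le_of_lt hε'pos)
      have hterm2 : ‖ψ (parent v)‖ * ‖Der parent (f k) v‖
          * Lam n (depth v) ≤ ε' * B := by
        have hid : ‖ψ (parent v)‖ * ‖Der parent (f k) v‖
            * Lam n (depth v)
            = (‖ψ (parent v)‖ * Lam n (depth v) / Lam m (depth v))
              * (‖Der parent (f k) v‖ * Lam m (depth v)) := by
          field_simp
        rw [hid]
        exact mul_le_mul (le_of_lt hνv) hDf
          (mul_nonneg (norm_nonneg _) (le_of_lt hLm)) (le_of_lt hε'pos)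
      have hmul := mul_le_mul_of_nonneg_right habs hLn
      have hrle : ‖Der parent (fun w => ψ w * f k w) v‖ * Lam n (depth v)
          ≤ 2 * ε' * B := by nlinarith [hterm1, hterm2, hmul]
      have hfinal : 2 * ε' * B ≤ ε / 4 := by nlinarith [hε'pos.le, hεeq]
      linarith
  have hnn : 0 ≤ lipNorm o parent depth n (fun v => ψ v * f k v) :=
    add_nonneg (norm_nonneg _) (hSnonneg n _ (hbψ k))
  have hlt : lipNorm o parent depth n (fun v => ψ v * f k v) < ε := by
    unfold lipNorm
    have h2' : ‖(fun v => ψ v * f k v) o‖ < ε / 2 := h2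
    linarith
  rw [Real.dist_eq, sub_zero, abs_of_nonneg hnn]
  exact hlt
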